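/- If δ > 0 is small enough, then the function F₁ is convex on ℝ, is even, and satisfies F₁(s) ≥ 0 for all s ∈ ℝ. -/

import Mathlib

open Real Set

noncomputable def Haux (δ : ℝ) : ℝ → ℝ := fun t =>
  if t < δ then -(1/2) * t^2 * Real.log (t^2)
  else -(1/2) * t^2 * (Real.log (δ^2) + 3) + 2*δ*t - (1/2)*δ^2

noncomputable def Daux (δ : ℝ) : ℝ → ℝ := fun t =>
  if t < δ then -t * Real.log (t^2) - t
  else -t * (Real.log (δ^2) + 3) + 2*δ

lemma p1_hasDerivAt {t : ℝ} (ht : t ≠ 0) :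
    HasDerivAt (fun t : ℝ => -(1/2) * t^2 * Real.log (t^2))
      (-t * Real.log (t^2) - t) t := by
  have h1 : HasDerivAt (fun t : ℝ => t^2) (2*t) t := by
    simpa using hasDerivAt_pow 2 t
  have ht2 : t^2 ≠ 0 := pow_ne_zero 2 ht
  have hlog : HasDerivAt (fun t : ℝ => Real.log (t^2)) (2*t / t^2) t := h1.log ht2
  have := (h1.const_mul (-(1/2) : ℝ)).mul hlog
  refine this.congr_deriv ?_
  field_simp
  ring

lemma p2_hasDerivAt (δ : ℝ) (t : ℝ) :
    HasDerivAt (fun t : ℝ => -(1/2) * t^2 * (Real.log (δ^2) + 3) + 2*δ*t - (1/2)*δ^2)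
      (-t * (Real.log (δ^2) + 3) + 2*δ) t := by
  have h1 : HasDerivAt (fun t : ℝ => t^2) (2*t) t := by
    simpa using hasDerivAt_pow 2 t
  have := (((h1.const_mul (-(1/2) : ℝ)).mul_const (Real.log (δ^2) + 3)).add
    ((hasDerivAt_id t).const_mul (2*δ))).sub_const ((1/2)*δ^2)
  refine this.congr_deriv ?_
  ring

lemma Haux_hasDerivAt (δ : ℝ) (hδ : 0 < δ) {t : ℝ} (ht : 0 < t) :
    HasDerivAt (Haux δ) (Daux δ t) t := by
  rcases lt_trichotomy t δ with h | h | h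
  · have hmem : Iio δ ∈ nhds t := Iio_mem_nhds h
    have heq : Haux δ =ᶠ[nhds t] fun t => -(1/2) * t^2 * Real.log (t^2) :=
      Filter.eventuallyEq_of_mem hmem fun u hu => if_pos hu
    rw [Daux, if_pos h]
    exact (p1_hasDerivAt ht.ne').congr_of_eventuallyEq heq
  · subst h
    have hpt : -(1/2) * t^2 * Real.log (t^2)
        = -(1/2) * t^2 * (Real.log (t^2) + 3) + 2*t*t - (1/2)*t^2 := by ring
    have h1 : HasDerivWithinAt (Haux t) (-t * (Real.log (t^2) + 3) + 2*t) (Iic t) t := by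
      refine ((p1_hasDerivAt ht.ne').hasDerivWithinAt.congr ?_ ?_).congr_deriv ?_
      · intro u hu
        rcases lt_or_eq_of_le (mem_Iic.mp hu) with h | h
        · simp only [Haux]; rw [if_pos h]
        · subst h; simp only [Haux]; rw [if_neg (lt_irrefl _)]; exact hpt.symm
      · simp only [Haux]; rw [if_neg (lt_irrefl _)]; exact hpt.symm
      · ring
    have h2 : HasDerivWithinAt (Haux t) (-t * (Real.log (t^2) + 3) + 2*t) (Ici t) t := by
      refine (p2_hasDerivAt t t).hasDerivWithinAt.congr ?_ ?_
      · intro u hu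
        simp [Haux, not_lt.mpr (mem_Ici.mp hu)]
      · simp [Haux, lt_irrefl]
    have := h1.union h2
    rw [Iic_union_Ici] at this
    rw [Daux, if_neg (lt_irrefl _)]
    exact this.hasDerivAt (by simp)
  · have hmem : Ioi δ ∈ nhds t := Ioi_mem_nhds h
    have heq : Haux δ =ᶠ[nhds t]
        fun t => -(1/2) * t^2 * (Real.log (δ^2) + 3) + 2*δ*t - (1/2)*δ^2 :=
      Filter.eventuallyEq_of_mem hmem fun u hu => if_neg (not_lt.mpr (le_of_lt hu))
    rw [Daux, if_neg (not_lt.mpr h.le)]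
    exact (p2_hasDerivAt δ t).congr_of_eventuallyEq heq

theorem F1_convex_even_nonneg (F₁ : ℝ → ℝ → ℝ)
    (hF₁ : ∀ δ : ℝ, 0 < δ → ∀ s : ℝ, F₁ δ s =
      if s = 0 then 0
      else if |s| < δ then -(1/2) * s^2 * Real.log (s^2)
      else -(1/2) * s^2 * (Real.log (δ^2) + 3) + 2*δ*|s| - (1/2)*δ^2) :
    ∃ δ₀ > 0, ∀ δ : ℝ, 0 < δ → δ < δ₀ →
      ConvexOn ℝ Set.univ (F₁ δ) ∧ (∀ s : ℝ, F₁ δ (-s) = F₁ δ s) ∧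
      (∀ s : ℝ, 0 ≤ F₁ δ s) := by
  refine ⟨Real.exp (-(3/2)), Real.exp_pos _, fun δ hδ hδ' => ?_⟩
  -- basic log facts
  have hlogδ : Real.log δ < -(3/2) := by
    have := Real.log_lt_log hδ hδ'
    rwa [Real.log_exp] at this
  have hlogδ2 : Real.log (δ^2) + 3 < 0 := by
    rw [Real.log_pow]; push_cast; linarith
  -- F₁ δ = Haux δ ∘ abs
  have hFH : F₁ δ = fun s => Haux δ |s| := by
    funext s
    rw [hF₁ δ hδ s]
    by_cases hs : s = 0
    · subst hs; simp [Haux, hδ]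
    · rw [if_neg hs]
      by_cases h2 : |s| < δ
      · rw [if_pos h2, Haux, if_pos h2, sq_abs]
      · rw [if_neg h2, Haux, if_neg h2, sq_abs]
  -- monotonicity of the derivative Daux on Ioi 0
  have hg1 : ∀ t : ℝ, t ≠ 0 → HasDerivAt (fun t : ℝ => -t * Real.log (t^2) - t)
      (-Real.log (t^2) - 3) t := by
    intro t ht
    have h1 : HasDerivAt (fun t : ℝ => t^2) (2*t) t := by
      simpa using hasDerivAt_pow 2 t
    have ht2 : t^2 ≠ 0 := pow_ne_zero 2 ht
    have hlog : HasDerivAt (fun t : ℝ => Real.log (t^2)) (2*t / t^2) t := h1.log ht2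
    have := (((hasDerivAt_id t).neg).mul hlog).sub (hasDerivAt_id t)
    refine this.congr_deriv ?_
    simp only [Pi.neg_apply, id_eq]
    field_simp
    ring
  have hlogsmall : ∀ t : ℝ, 0 < t → t < δ → Real.log (t^2) < -3 := by
    intro t ht htδ
    have h1 : Real.log t < -(3/2) := (Real.log_lt_log ht htδ).trans hlogδ
    rw [Real.log_pow]; push_cast; linarith
  have hsm1 : StrictMonoOn (fun t : ℝ => -t * Real.log (t^2) - t) (Ioc 0 δ) := by
    apply strictMonoOn_of_deriv_pos (convex_Ioc 0 δ)
    · intro t ht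
      exact (hg1 t ht.1.ne').continuousAt.continuousWithinAt
    · intro t ht
      rw [interior_Ioc] at ht
      rw [(hg1 t ht.1.ne').deriv]
      have := hlogsmall t ht.1 ht.2
      linarith
  have hDδ : Daux δ δ = -δ * Real.log (δ^2) - δ := by
    rw [Daux, if_neg (lt_irrefl δ)]; ring
  have hDeq : ∀ t ∈ Ioc (0:ℝ) δ, Daux δ t = -t * Real.log (t^2) - t := by
    intro t ht
    rcases lt_or_eq_of_le ht.2 with h | h
    · rw [Daux, if_pos h]
    · subst h; exact hDδ
  have hDmono : MonotoneOn (Daux δ) (Ioi 0) := by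
    intro a ha b hb hab
    rcases lt_or_ge b δ with hbδ | hbδ
    · have haδ : a < δ := lt_of_le_of_lt hab hbδ
      rw [hDeq a ⟨ha, haδ.le⟩, hDeq b ⟨hb, hbδ.le⟩]
      exact hsm1.monotoneOn ⟨ha, haδ.le⟩ ⟨hb, hbδ.le⟩ hab
    · have hDb : Daux δ b = -b * (Real.log (δ^2) + 3) + 2*δ := by
        rw [Daux, if_neg (not_lt.mpr hbδ)]
      rcases lt_or_ge a δ with haδ | haδ
      · have h1 : Daux δ a ≤ Daux δ δ := by
          rw [hDeq a ⟨ha, haδ.le⟩, hDeq δ ⟨hδ, le_refl δ⟩]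
          exact hsm1.monotoneOn ⟨ha, haδ.le⟩ ⟨hδ, le_refl δ⟩ haδ.le
        have h2 : Daux δ δ ≤ Daux δ b := by
          rw [Daux, if_neg (lt_irrefl δ), hDb]
          nlinarith
        linarith
      · have hDa : Daux δ a = -a * (Real.log (δ^2) + 3) + 2*δ := by
          rw [Daux, if_neg (not_lt.mpr haδ)]
        rw [hDa, hDb]
        nlinarith
  have hDnonneg : ∀ t ∈ Ioi (0:ℝ), 0 ≤ Daux δ t := by
    intro t ht
    rw [mem_Ioi] at ht
    rcases lt_or_ge t δ with h | h
    · rw [Daux, if_pos h]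
      have := hlogsmall t ht h
      nlinarith
    · rw [Daux, if_neg (not_lt.mpr h)]
      nlinarith [lt_of_lt_of_le hδ h]
  -- continuity of Haux on Ici 0
  have hcontH : ContinuousOn (Haux δ) (Ici 0) := by
    intro t ht
    rcases eq_or_lt_of_le (mem_Ici.mp ht) with h | h
    · subst h
      have hc : Continuous fun t : ℝ => -(1/2) * (t^2 * Real.log (t^2)) :=
        continuous_const.mul (Real.continuous_mul_log.comp (continuous_pow 2))
    -- Haux agrees with this near 0
      have heq : Haux δ =ᶠ[nhds (0:ℝ)] fun t => -(1/2) * (t^2 * Real.log (t^2)) := by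
        refine Filter.eventuallyEq_of_mem (Iio_mem_nhds hδ) fun u hu => ?_
        simp only [Haux]; rw [if_pos (mem_Iio.mp hu)]; ring
      exact (hc.continuousAt.congr heq.symm).continuousWithinAt
    · exact ((Haux_hasDerivAt δ hδ h).differentiableAt.continuousAt).continuousWithinAt
  have hdiffH : DifferentiableOn ℝ (Haux δ) (interior (Ici (0:ℝ))) := by
    rw [interior_Ici]
    intro t ht
    exact (Haux_hasDerivAt δ hδ (mem_Ioi.mp ht)).differentiableAt.differentiableWithinAt
  have hderivH : ∀ t ∈ Ioi (0:ℝ), deriv (Haux δ) t = Daux δ t := fun t ht =>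
    (Haux_hasDerivAt δ hδ (mem_Ioi.mp ht)).deriv
  have hconvH : ConvexOn ℝ (Ici 0) (Haux δ) := by
    apply MonotoneOn.convexOn_of_deriv (convex_Ici 0) hcontH hdiffH
    rw [interior_Ici]
    intro a ha b hb hab
    rw [hderivH a ha, hderivH b hb]
    exact hDmono ha hb hab
  have hmonoH : MonotoneOn (Haux δ) (Ici 0) := by
    apply monotoneOn_of_deriv_nonneg (convex_Ici 0) hcontH hdiffH
    rw [interior_Ici]
    intro t ht
    rw [hderivH t ht]
    exact hDnonneg t ht
  have himg : (fun s : ℝ => |s|) '' univ = Ici 0 := by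
    rw [Set.image_univ]
    ext x
    simp only [mem_range, mem_Ici]
    constructor
    · rintro ⟨y, rfl⟩; exact abs_nonneg y
    · intro hx; exact ⟨x, abs_of_nonneg hx⟩
  have habs : ConvexOn ℝ (univ : Set ℝ) (fun s : ℝ => |s|) := by
    exact convexOn_univ_norm (E := ℝ)
  have hconv : ConvexOn ℝ (univ : Set ℝ) (fun s => Haux δ |s|) := by
    have := ConvexOn.comp (g := Haux δ) (f := fun s : ℝ => |s|)
      (himg ▸ hconvH) habs (himg ▸ hmonoH)
    exact this
  have hH0 : Haux δ 0 = 0 := by simp [Haux, hδ]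
  refine ⟨?_, ?_, ?_⟩
  · rw [hFH]; exact hconv
  · intro s; rw [hFH]; simp
  · intro s
    rw [hFH]
    have := hmonoH (mem_Ici.mpr (le_refl 0)) (mem_Ici.mpr (abs_nonneg s)) (abs_nonneg s)
    rw [hH0] at this
    exact this
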